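/- Backtracing step correctness: suppose (u, v) ∈ P_i (so u = b_i, v = b_i - b_{i-1} for some feasible prefix). Let x' = u - v. Then there exists y ∈ R with (x', y) ∈ P_{i-1} and z_i^- ≤ v - α_i y ≤ z_i^+; moreover, if y_max = sup{ y : (x', y) ∈ P_{i-1} } is attained, then either v - α_i y_max ∈ [z_i^-, z_i^+] (take y = y_max), or y = (v - z_i^-)/α_i satisfies (x', y) ∈ P_{i-1} and v - α_i y = z_i^-. -/

import Mathlib

/-- The truncated solution set `S_k`: vectors (0-indexed) satisfying the value,
first-order and second-order difference constraints on the first `k` entries. -/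
def solSet (xm xp ym yp zm zp al : ℕ → ℝ) (k : ℕ) : Set (ℕ → ℝ) :=
  {b | (∀ j, j < k → xm j ≤ b j ∧ b j ≤ xp j) ∧
       (∀ j, 1 ≤ j → j < k → ym j ≤ b j - b (j - 1) ∧ b j - b (j - 1) ≤ yp j) ∧
       (∀ j, 2 ≤ j → j < k →
          zm j ≤ (b j - b (j - 1)) - al j * (b (j - 1) - b (j - 2)) ∧
          (b j - b (j - 1)) - al j * (b (j - 1) - b (j - 2)) ≤ zp j)}

/-- The feasibility polygon `P_k = {(b_{k-1}, b_{k-1} - b_{k-2}) : b ∈ S_k}`. -/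
def feasSet (xm xp ym yp zm zp al : ℕ → ℝ) (k : ℕ) : Set (ℝ × ℝ) :=
  {p | ∃ b ∈ solSet xm xp ym yp zm zp al k, p = (b (k - 1), b (k - 1) - b (k - 2))}

theorem stmt_16 (xm xp ym yp zm zp al : ℕ → ℝ)
    (hx : ∀ j, xm j ≤ xp j) (hy : ∀ j, ym j ≤ yp j) (hz : ∀ j, zm j ≤ zp j)
    (hal : ∀ j, 0 < al j) (i : ℕ) (hi : 3 ≤ i) (u v : ℝ)
    (huv : (u, v) ∈ feasSet xm xp ym yp zm zp al i) :
    (∃ y : ℝ, (u - v, y) ∈ feasSet xm xp ym yp zm zp al (i - 1) ∧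
        zm (i - 1) ≤ v - al (i - 1) * y ∧ v - al (i - 1) * y ≤ zp (i - 1)) ∧
    (∀ ymax : ℝ,
      IsGreatest {y : ℝ | (u - v, y) ∈ feasSet xm xp ym yp zm zp al (i - 1)} ymax →
      ({y : ℝ | (u - v, y) ∈ feasSet xm xp ym yp zm zp al (i - 1)}).OrdConnected →
      ((zm (i - 1) ≤ v - al (i - 1) * ymax ∧ v - al (i - 1) * ymax ≤ zp (i - 1)) ∨
       ((u - v, (v - zm (i - 1)) / al (i - 1)) ∈ feasSet xm xp ym yp zm zp al (i - 1) ∧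
        v - al (i - 1) * ((v - zm (i - 1)) / al (i - 1)) = zm (i - 1)))) := by
  obtain ⟨b, ⟨h1, h2, h3⟩, heq⟩ := huv
  have e1 : i - 1 - 1 = i - 2 := by omega
  have e2 : i - 1 - 2 = i - 3 := by omega
  have hu : u = b (i - 1) := by simpa using congrArg Prod.fst heq
  have hv : v = b (i - 1) - b (i - 2) := by simpa using congrArg Prod.snd heq
  have huv' : u - v = b (i - 2) := by rw [hu, hv]; ring
  set y0 : ℝ := b (i - 2) - b (i - 3) with hy0def
  have hbS : b ∈ solSet xm xp ym yp zm zp al (i - 1) := by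
    refine ⟨fun j hj => h1 j (by omega), fun j hj1 hj2 => h2 j hj1 (by omega),
      fun j hj1 hj2 => h3 j hj1 (by omega)⟩
  have hmem : (u - v, y0) ∈ feasSet xm xp ym yp zm zp al (i - 1) := by
    exact ⟨b, hbS, by rw [e1, e2, huv']⟩
  have hcon := h3 (i - 1) (by omega) (by omega)
  rw [e1, e2] at hcon
  have hvy : v - al (i - 1) * y0 =
      (b (i - 1) - b (i - 2)) - al (i - 1) * (b (i - 2) - b (i - 3)) := by
    rw [hv]
  have hy0c : zm (i - 1) ≤ v - al (i - 1) * y0 ∧ v - al (i - 1) * y0 ≤ zp (i - 1) := by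
    rw [hvy]; exact hcon
  constructor
  · exact ⟨y0, hmem, hy0c⟩
  · intro ymax hg hoc
    by_cases hc : zm (i - 1) ≤ v - al (i - 1) * ymax
    · left
      refine ⟨hc, ?_⟩
      have hle : y0 ≤ ymax := hg.2 hmem
      have := mul_le_mul_of_nonneg_left hle (le_of_lt (hal (i - 1)))
      calc v - al (i - 1) * ymax ≤ v - al (i - 1) * y0 := by linarith
        _ ≤ zp (i - 1) := hy0c.2
    · right
      push_neg at hc
      have hα := hal (i - 1)
      have hne : al (i - 1) ≠ 0 := ne_of_gt hα
      set ys : ℝ := (v - zm (i - 1)) / al (i - 1) with hysdef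
      have heq2 : v - al (i - 1) * ys = zm (i - 1) := by
        rw [hysdef, mul_div_assoc', mul_div_cancel_left₀ _ hne]; ring
      refine ⟨?_, heq2⟩
      have h1' : y0 ≤ ys := by
        rw [hysdef, le_div_iff₀ hα]
        have := hy0c.1
        nlinarith
      have h2' : ys ≤ ymax := by
        rw [hysdef, div_le_iff₀ hα]
        nlinarith
      exact hoc.out hmem hg.1 ⟨h1', h2'⟩
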